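/- Define iterated exponentials by ω_0(α) = α and ω_{m+1}(α) = ω^{ω_m(α)} for m < ω. For every natural number m and all ordinals δ₀, δ₁, η: if δ₀ ≪ δ₁ {η} then ω_m(δ₀) ≪ ω_m(δ₁) {η}. -/

import Mathlib

open Ordinal Set

noncomputable section

/-- A cardinal is weakly inaccessible: uncountable, regular, and a limit cardinal. -/
def WeaklyInaccessible (c : Cardinal) : Prop :=
  Cardinal.aleph0 < c ∧ c.IsRegular ∧ ∀ x < c, Order.succ x < c

/-- `I` is (the initial ordinal of) the least weakly inaccessible cardinal. -/
def I : Ordinal := (sInf {c : Cardinal | WeaklyInaccessible c}).ord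

/-- `Om α` is `Ω_α`: `0` for `α = 0` and the initial ordinal of `ℵ_α` otherwise. -/
def Om (α : Ordinal) : Ordinal := if α = 0 then 0 else (Cardinal.aleph α).ord

/-- `R = {Ω_{μ+1} : μ < I} ∪ {I}`. -/
def R : Set Ordinal := {o | (∃ μ < I, o = Om (μ + 1)) ∨ o = I}

/-- Given the family of hulls at earlier stages, the collapse `ψ_σ`. -/
def psiOf (F : Set Ordinal → Set Ordinal) (σ : Ordinal) : Ordinal :=
  sInf ({β | β < σ ∧ σ ∈ F (Set.Iio β) ∧ F (Set.Iio β) ∩ Set.Iio σ ⊆ Set.Iio β} ∪ {σ})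

instance : WellFoundedRelation Ordinal := ⟨(· < ·), Ordinal.lt_wf⟩

/-- `H α X` is the least set of ordinals containing `X ∪ {0, I}` and closed under
ordinal addition, `β ↦ ω^β`, `β ↦ Ω_β`, and `(σ, β) ↦ ψ_σ β` for `σ ∈ R` and `β < α`. -/
def H (α : Ordinal) (X : Set Ordinal) : Set Ordinal :=
  ⋂₀ {Y : Set Ordinal | X ∪ {0, I} ⊆ Y ∧
      (∀ γ ∈ Y, ∀ δ ∈ Y, γ + δ ∈ Y) ∧
      (∀ γ ∈ Y, Ordinal.omega0 ^ γ ∈ Y) ∧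
      (∀ γ ∈ Y, Om γ ∈ Y) ∧
      (∀ σ ∈ R, ∀ β ∈ Y, β < α → σ ∈ Y → psiOf (H β) σ ∈ Y)}
termination_by α
decreasing_by assumption

/-- The collapsing function `ψ_σ α`. -/
def psi (σ α : Ordinal) : Ordinal := psiOf (H α) σ

/-- The relation `δ₀ ≪ δ₁ {η}`. -/
def llr (η δ₀ δ₁ : Ordinal) : Prop :=
  δ₀ < δ₁ ∧ ∀ σ ∈ R, ∀ α : Ordinal,
    δ₁ ∈ H α (Set.Iio (psi σ α)) → η ∈ H α (Set.Iio (psi σ α)) → δ₀ ∈ H α (Set.Iio (psi σ α))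

/-- Iterated exponentials: `ω_0(α) = α`, `ω_{m+1}(α) = ω^{ω_m(α)}`. -/
def omIter : ℕ → Ordinal → Ordinal
  | 0, α => α
  | m + 1, α => Ordinal.omega0 ^ (omIter m α)

/-! ### Auxiliary lemmas -/

/-- The closure conditions defining `H α X`. -/
def Fam (α : Ordinal) (X : Set Ordinal) (Y : Set Ordinal) : Prop :=
  X ∪ {0, I} ⊆ Y ∧
      (∀ γ ∈ Y, ∀ δ ∈ Y, γ + δ ∈ Y) ∧
      (∀ γ ∈ Y, Ordinal.omega0 ^ γ ∈ Y) ∧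
      (∀ γ ∈ Y, Om γ ∈ Y) ∧
      (∀ σ ∈ R, ∀ β ∈ Y, β < α → σ ∈ Y → psiOf (H β) σ ∈ Y)

lemma H_eq (α : Ordinal) (X : Set Ordinal) : H α X = ⋂₀ {Y : Set Ordinal | Fam α X Y} := by
  rw [H]; rfl

lemma H_fam (α : Ordinal) (X : Set Ordinal) : Fam α X (H α X) := by
  rw [H_eq]
  exact ⟨fun x hx Y hY => hY.1 hx,
    fun γ hγ δ hδ Y hY => hY.2.1 γ (hγ Y hY) δ (hδ Y hY),
    fun γ hγ Y hY => hY.2.2.1 γ (hγ Y hY),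
    fun γ hγ Y hY => hY.2.2.2.1 γ (hγ Y hY),
    fun σ hσ β hβ hβα hσ' Y hY => hY.2.2.2.2 σ hσ β (hβ Y hY) hβα (hσ' Y hY)⟩

lemma H_min {α : Ordinal} {X Y : Set Ordinal} (hY : Fam α X Y) : H α X ⊆ Y := by
  rw [H_eq]; exact sInter_subset_of_mem hY

lemma card_opow_le : ∀ a : Ordinal, (Ordinal.omega0 ^ a).card ≤ max Cardinal.aleph0 a.card := by
  intro a
  induction a using Ordinal.limitRecOn with
  | zero => simp
  | add_one b ih =>
      rw [← Order.succ_eq_add_one]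
      rw [Ordinal.opow_succ, Ordinal.card_mul, Ordinal.card_omega0]
      calc (Ordinal.omega0 ^ b).card * Cardinal.aleph0
          ≤ (max Cardinal.aleph0 b.card) * Cardinal.aleph0 :=
            mul_le_mul_left ih _
        _ = max Cardinal.aleph0 b.card := by
            rw [Cardinal.mul_eq_max (le_max_left _ _) le_rfl]
            exact max_eq_left (le_max_left _ _)
        _ ≤ max Cardinal.aleph0 (Order.succ b).card :=
            max_le_max le_rfl (Ordinal.card_le_card (Order.le_succ b))
  | limit b hb ih =>
      have hbc : Cardinal.aleph0 ≤ b.card :=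
        Ordinal.aleph0_le_card.2 (Ordinal.omega0_le_of_isSuccLimit hb)
      have heq : Ordinal.omega0 ^ b = ⨆ a : Set.Iio b, Ordinal.omega0 ^ (a : Ordinal) :=
        (Ordinal.isNormal_opow Ordinal.one_lt_omega0).apply_of_isSuccLimit hb
      rw [heq]
      calc (⨆ a : Set.Iio b, Ordinal.omega0 ^ (a : Ordinal)).card
          ≤ Cardinal.lift b.card * ⨆ a : Set.Iio b, (Ordinal.omega0 ^ (a : Ordinal)).card :=
            Ordinal.card_iSup_Iio_le_card_mul_iSup _
        _ ≤ b.card * max Cardinal.aleph0 b.card := by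
            rw [Cardinal.lift_id]
            refine mul_le_mul_right ?_ _
            have : Nonempty (Set.Iio b) := ⟨⟨0, hb.pos⟩⟩
            refine ciSup_le' fun a => (ih a a.2).trans ?_
            exact max_le_max le_rfl (Ordinal.card_le_card a.2.le)
        _ = max Cardinal.aleph0 b.card := by
            rw [Cardinal.mul_eq_max hbc (hbc.trans (le_max_right _ _))]
            exact max_eq_right (le_max_right _ _)

lemma opow_lt_ord {c : Cardinal} (hc : Cardinal.aleph0 < c) {a : Ordinal}
    (ha : a < c.ord) : Ordinal.omega0 ^ a < c.ord := by
  rw [Cardinal.lt_ord] at ha ⊢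
  exact (_root_.card_opow_le a).trans_lt (max_lt hc ha)

/-- The initial ordinal of an uncountable cardinal is an epsilon number. -/
lemma omega0_opow_ord {c : Cardinal} (hc : Cardinal.aleph0 < c) :
    Ordinal.omega0 ^ c.ord = c.ord := by
  apply le_antisymm
  · rw [Ordinal.opow_le_of_isSuccLimit Ordinal.omega0_ne_zero (Cardinal.isSuccLimit_ord hc.le)]
    exact fun b hb => (opow_lt_ord hc hb).le
  · exact Ordinal.right_le_opow _ Ordinal.one_lt_omega0

lemma aleph0_lt_aleph {o : Ordinal} (ho : o ≠ 0) : Cardinal.aleph0 < Cardinal.aleph o := by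
  have := Cardinal.aleph_lt_aleph.2 (pos_iff_ne_zero.2 ho)
  rwa [Cardinal.aleph_zero] at this

/-- `Ω_β` for `β ≠ 0` is an epsilon number. -/
lemma omega0_opow_Om {β : Ordinal} (hβ : β ≠ 0) : Ordinal.omega0 ^ Om β = Om β := by
  rw [Om, if_neg hβ]
  exact omega0_opow_ord (aleph0_lt_aleph hβ)

lemma opow_right_inj {γ β : Ordinal} (h : Ordinal.omega0 ^ γ = Ordinal.omega0 ^ β) :
    γ = β := by
  by_contra hne
  rcases lt_or_gt_of_ne hne with hlt | hlt <;>
    simpa [h] using (Ordinal.opow_lt_opow_iff_right Ordinal.one_lt_omega0).2 hlt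

universe u

lemma I_eq_zero (h : ¬ ∃ c : Cardinal.{u}, WeaklyInaccessible c) : I.{u} = 0 := by
  rw [I]
  have he : {c : Cardinal.{u} | WeaklyInaccessible c} = ∅ := by
    ext c
    simp only [Set.mem_setOf_eq, Set.mem_empty_iff_false, iff_false]
    exact fun hc => h ⟨c, hc⟩
  rw [he, Cardinal.sInf_empty]
  exact Cardinal.ord_zero

lemma eq_I_of_opow {γ : Ordinal.{u}} (h : Ordinal.omega0 ^ γ = I.{u}) : γ = I.{u} := by
  by_cases hex : ∃ c : Cardinal.{u}, WeaklyInaccessible c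
  · have hmem : WeaklyInaccessible (sInf {c : Cardinal.{u} | WeaklyInaccessible c}) :=
      csInf_mem hex
    have hI : Ordinal.omega0 ^ I.{u} = I.{u} := omega0_opow_ord hmem.1
    rw [← hI] at h
    exact opow_right_inj h
  · rw [I_eq_zero hex] at h
    exact absurd h (Ordinal.opow_ne_zero γ Ordinal.omega0_ne_zero)

lemma eq_R_of_opow {σ γ : Ordinal.{u}} (hσ : σ ∈ R) (h : Ordinal.omega0 ^ γ = σ) :
    γ = σ := by
  rcases hσ with ⟨μ, _, rfl⟩ | rfl
  · have hμ : μ + 1 ≠ 0 := fun hc => absurd (Ordinal.add_one_eq_succ μ ▸ hc) (Order.succ_ne_bot μ)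
    rw [← omega0_opow_Om hμ] at h
    exact opow_right_inj h
  · exact eq_I_of_opow h

/-- Key lemma: `H α (Iio t)` is closed under taking the exponent of `ω^·`. -/
lemma exp_mem_H {α t γ : Ordinal.{u}}
    (h : Ordinal.omega0 ^ γ ∈ H α (Set.Iio t)) : γ ∈ H α (Set.Iio t) := by
  set Y := H α (Set.Iio t) with hYdef
  have hY : Fam α (Set.Iio t) Y := H_fam α _
  set Y' : Set Ordinal := {β | β ∈ Y ∧ ∀ γ, Ordinal.omega0 ^ γ = β → γ ∈ Y} with hY'def
  have hfam : Fam α (Set.Iio t) Y' := by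
    refine ⟨?_, ?_, ?_, ?_, ?_⟩
    · rintro x (hx | hx)
      · -- x ∈ Iio t
        refine ⟨hY.1 (Or.inl hx), fun γ hγ => hY.1 (Or.inl ?_)⟩
        have : γ ≤ Ordinal.omega0 ^ γ := Ordinal.right_le_opow _ Ordinal.one_lt_omega0
        exact lt_of_le_of_lt (hγ ▸ this) hx
      · rcases hx with rfl | hx
        · -- x = 0
          refine ⟨hY.1 (Or.inr (Or.inl rfl)), fun γ hγ => ?_⟩
          exact absurd hγ (Ordinal.opow_ne_zero γ Ordinal.omega0_ne_zero)
        · -- x = I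
          rcases hx with rfl
          refine ⟨hY.1 (Or.inr (Or.inr rfl)), fun γ hγ => ?_⟩
          rw [eq_I_of_opow hγ]; exact hY.1 (Or.inr (Or.inr rfl))
    · -- addition
      rintro γ₁ ⟨hγ₁, hγ₁'⟩ γ₂ ⟨hγ₂, hγ₂'⟩
      refine ⟨hY.2.1 γ₁ hγ₁ γ₂ hγ₂, fun γ hγ => ?_⟩
      have hprin := Ordinal.principal_add_omega0_opow γ
      rcases eq_or_lt_of_le (le_add_self : γ₂ ≤ γ₁ + γ₂) with h2 | h2
      · exact hγ₂' γ (hγ ▸ h2.symm)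
      · rcases eq_or_lt_of_le (le_self_add : γ₁ ≤ γ₁ + γ₂) with h1 | h1
        · exact hγ₁' γ (hγ ▸ h1.symm)
        · exact absurd hγ (hprin (hγ ▸ h1) (hγ ▸ h2)).ne'
    · -- ω^
      rintro β ⟨hβ, hβ'⟩
      exact ⟨hY.2.2.1 β hβ, fun γ hγ => (opow_right_inj hγ) ▸ hβ⟩
    · -- Om
      rintro β ⟨hβ, hβ'⟩
      refine ⟨hY.2.2.2.1 β hβ, fun γ hγ => ?_⟩
      rcases eq_or_ne β 0 with rfl | hβ0
      · rw [Om, if_pos rfl] at hγ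
        exact absurd hγ (Ordinal.opow_ne_zero γ Ordinal.omega0_ne_zero)
      · have : γ = Om β := by
          rw [← omega0_opow_Om hβ0] at hγ
          exact opow_right_inj hγ
        rw [this]; exact hY.2.2.2.1 β hβ
    · -- ψ
      rintro σ hσ β ⟨hβ, hβ'⟩ hβα ⟨hσY, hσY'⟩
      have hψY : psiOf (H β) σ ∈ Y := hY.2.2.2.2 σ hσ β hβ hβα hσY
      refine ⟨hψY, fun γ hγ => ?_⟩
      set ψ' := psiOf (H β) σ with hψ'def
      have hmem : ψ' ∈ ({b | b < σ ∧ σ ∈ H β (Set.Iio b) ∧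
          H β (Set.Iio b) ∩ Set.Iio σ ⊆ Set.Iio b} ∪ {σ}) :=
        csInf_mem ⟨σ, Or.inr rfl⟩
      rcases hmem with ⟨hlt, _, hsub⟩ | heq
      · -- ψ' < σ and the trapping condition holds
        have hγψ : γ = ψ' := by
          rcases lt_or_eq_of_le ((Ordinal.right_le_opow γ Ordinal.one_lt_omega0).trans_eq hγ)
            with hlt' | heq'
          · exfalso
            have h1 : γ ∈ H β (Set.Iio ψ') := (H_fam β _).1 (Or.inl hlt')
            have h2 : Ordinal.omega0 ^ γ ∈ H β (Set.Iio ψ') := (H_fam β _).2.2.1 γ h1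
            have h3 : Ordinal.omega0 ^ γ < σ := hγ ▸ hlt
            exact absurd (hsub ⟨h2, h3⟩) (by rw [hγ]; exact lt_irrefl ψ')
          · exact heq'
        rw [hγψ]; exact hψY
      · -- ψ' = σ
        rw [mem_singleton_iff] at heq
        rw [heq] at hγ
        rw [eq_R_of_opow hσ hγ, ← heq]
        exact hψY
  exact (H_min hfam h).2 γ rfl

theorem stmt17 (hex : ∃ c : Cardinal, WeaklyInaccessible c)
    (m : ℕ) (δ₀ δ₁ η : Ordinal) (h : llr η δ₀ δ₁) :
    llr η (omIter m δ₀) (omIter m δ₁) := by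
  induction m with
  | zero => exact h
  | succ m ih =>
      obtain ⟨ihlt, ihm⟩ := ih
      constructor
      · exact (Ordinal.opow_lt_opow_iff_right Ordinal.one_lt_omega0).2 ihlt
      · intro σ hσ α h1 h2
        have hb : omIter m δ₁ ∈ H α (Set.Iio (psi σ α)) := exp_mem_H h1
        have ha : omIter m δ₀ ∈ H α (Set.Iio (psi σ α)) := ihm σ hσ α hb h2
        exact (H_fam α _).2.2.1 _ ha

end
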